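/- Let K̃ be a compact simply connected Lie group, c a central element, K = K̃/⟨c⟩, and (x,y) a c-pair in K̃ with images x̄, ȳ ∈ K defining ρ : Z² → K. Then there is an exact sequence 1 → ⟨c⟩ → Z_{K̃}(x,y) → Z_K(ρ) → ⟨c⟩ × ⟨c⟩ → 1, where the last map sends ḡ ∈ Z_K(ρ) to ([g,x],[g,y]) for any lift g of ḡ to K̃. -/

import Mathlib

open scoped commutatorElement

private lemma aux_zpow_semiconj {G : Type*} [Group G] (a b z : G)
    (hz : ∀ w : G, Commute z w) (h : a * b = z * (b * a)) :
    ∀ n : ℤ, a ^ n * b = z ^ n * (b * a ^ n) := by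
  intro n
  have hinv : a⁻¹ * b = z⁻¹ * (b * a⁻¹) := by
    have : b * a⁻¹ = z * (a⁻¹ * b) := by
      calc b * a⁻¹ = a⁻¹ * (a * b) * a⁻¹ := by group
        _ = a⁻¹ * (z * (b * a)) * a⁻¹ := by rw [h]
        _ = (a⁻¹ * z) * b := by group
        _ = (z * a⁻¹) * b := by rw [(hz a⁻¹).eq]
        _ = z * (a⁻¹ * b) := by rw [mul_assoc]
    rw [this]; group
  induction n using Int.induction_on with
  | zero => simp
  | succ n ih =>
    calc a ^ ((n : ℤ) + 1) * b = a ^ (n : ℤ) * (a * b) := by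
          rw [zpow_add_one]; group
      _ = a ^ (n : ℤ) * (z * (b * a)) := by rw [h]
      _ = (a ^ (n : ℤ) * z) * (b * a) := by rw [mul_assoc]
      _ = (z * a ^ (n : ℤ)) * (b * a) := by rw [(hz _).eq]
      _ = z * ((a ^ (n : ℤ) * b) * a) := by group
      _ = z * ((z ^ (n : ℤ) * (b * a ^ (n : ℤ))) * a) := by rw [ih]
      _ = (z * z ^ (n : ℤ)) * (b * a ^ ((n : ℤ) + 1)) := by rw [zpow_add_one]; group
      _ = z ^ ((n : ℤ) + 1) * (b * a ^ ((n : ℤ) + 1)) := by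
          rw [← zpow_one_add, add_comm]
  | pred n ih =>
    calc a ^ (-(n : ℤ) - 1) * b = a⁻¹ * (a ^ (-(n : ℤ)) * b) := by
          rw [zpow_sub_one]; group
      _ = a⁻¹ * (z ^ (-(n : ℤ)) * (b * a ^ (-(n : ℤ)))) := by rw [ih]
      _ = (a⁻¹ * z ^ (-(n : ℤ))) * (b * a ^ (-(n : ℤ))) := by rw [mul_assoc]
      _ = (z ^ (-(n : ℤ)) * a⁻¹) * (b * a ^ (-(n : ℤ))) := by
          rw [((hz a⁻¹).zpow_left _).eq]
      _ = z ^ (-(n : ℤ)) * ((a⁻¹ * b) * a ^ (-(n : ℤ))) := by group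
      _ = z ^ (-(n : ℤ)) * ((z⁻¹ * (b * a⁻¹)) * a ^ (-(n : ℤ))) := by rw [hinv]
      _ = (z ^ (-(n : ℤ)) * z⁻¹) * (b * a ^ (-(n : ℤ) - 1)) := by
          rw [zpow_sub_one]; group
      _ = z ^ (-(n : ℤ) - 1) * (b * a ^ (-(n : ℤ) - 1)) := by rw [zpow_sub_one z]

private lemma comm_of_rel {G : Type*} [Group G] (g w u : G)
    (h : g * w = u * (w * g)) : ⁅g, w⁆ = u := by
  rw [commutatorElement_def]
  calc g * w * g⁻¹ * w⁻¹ = (u * (w * g)) * g⁻¹ * w⁻¹ := by rw [h]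
    _ = u := by group

theorem cPair_centralizer_exact_sequence
    {G : Type*} [Group G] (c : G) (hc : c ∈ Subgroup.center G)
    (x y : G) (hxy : ⁅x, y⁆ = c) :
    -- `⟨c⟩` is contained in `Z_{K̃}(x,y)`, and is the kernel of the projection to `K`
    Subgroup.zpowers c ≤ Subgroup.centralizer {x, y} ∧
    -- the commutators `⁅g,x⁆`, `⁅g,y⁆` are unchanged under modifying `g` by `⟨c⟩`,
    -- so the last map is well defined independently of the choice of lift
    (∀ g n : G, n ∈ Subgroup.zpowers c → ⁅g * n, x⁆ = ⁅g, x⁆ ∧ ⁅g * n, y⁆ = ⁅g, y⁆) ∧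
    -- exactness at `Z_K(ρ)`: an element of `Z_K(ρ)` has trivial image in `⟨c⟩ × ⟨c⟩`
    -- if and only if it lifts to an element of `Z_{K̃}(x,y)`
    (∀ g : G, ⁅g, x⁆ ∈ Subgroup.zpowers c → ⁅g, y⁆ ∈ Subgroup.zpowers c →
      ((⁅g, x⁆ = 1 ∧ ⁅g, y⁆ = 1) ↔
        ∃ g' ∈ Subgroup.centralizer {x, y}, g'⁻¹ * g ∈ Subgroup.zpowers c)) ∧
    -- the last map is surjective onto `⟨c⟩ × ⟨c⟩`
    (∀ a b : ℤ, ∃ g : G, ⁅g, x⁆ = c ^ a ∧ ⁅g, y⁆ = c ^ b) := by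
  have hzc : ∀ w : G, Commute c w := fun w => ((Subgroup.mem_center_iff.mp hc) w).symm
  have h1 : x * y = c * (y * x) := by
    have h0 : x * y * x⁻¹ * y⁻¹ = c := by rwa [commutatorElement_def] at hxy
    calc x * y = (x * y * x⁻¹ * y⁻¹) * (y * x) := by group
      _ = c * (y * x) := by rw [h0]
  have h2 : y * x = c⁻¹ * (x * y) := by
    rw [h1]; group
  -- part 2 as a reusable fact
  have part2 : ∀ g n : G, n ∈ Subgroup.zpowers c →
      ⁅g * n, x⁆ = ⁅g, x⁆ ∧ ⁅g * n, y⁆ = ⁅g, y⁆ := by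
    intro g n hn
    obtain ⟨k, rfl⟩ := hn
    have key : ∀ w : G, ⁅g * c ^ k, w⁆ = ⁅g, w⁆ := by
      intro w
      have hcw : c ^ k * w * (c ^ k)⁻¹ = w := by
        rw [((hzc w).zpow_left k).eq, mul_inv_cancel_right]
      rw [commutatorElement_def, commutatorElement_def, mul_inv_rev]
      calc g * c ^ k * w * ((c ^ k)⁻¹ * g⁻¹) * w⁻¹
          = g * (c ^ k * w * (c ^ k)⁻¹) * g⁻¹ * w⁻¹ := by group
        _ = g * w * g⁻¹ * w⁻¹ := by rw [hcw]
    exact ⟨key x, key y⟩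
  refine ⟨?_, part2, ?_, ?_⟩
  · rintro g ⟨k, rfl⟩
    rw [Subgroup.mem_centralizer_iff]
    rintro h (rfl | rfl) <;> exact (((hzc _).zpow_left k).eq).symm
  · intro g _ _
    constructor
    · rintro ⟨hgx, hgy⟩
      refine ⟨g, ?_, by simpa using Subgroup.one_mem _⟩
      rw [Subgroup.mem_centralizer_iff]
      have cx := commutatorElement_eq_one_iff_commute.mp hgx
      have cy := commutatorElement_eq_one_iff_commute.mp hgy
      rintro h (rfl | rfl)
      · exact cx.eq.symm
      · exact cy.eq.symm
    · rintro ⟨g', hg', hm⟩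
      have hgeq : g = g' * (g'⁻¹ * g) := by group
      have hx' := (part2 g' (g'⁻¹ * g) hm).1
      have hy' := (part2 g' (g'⁻¹ * g) hm).2
      rw [← hgeq] at hx' hy'
      rw [hx', hy']
      have := Subgroup.mem_centralizer_iff.mp hg'
      constructor
      · exact commutatorElement_eq_one_iff_commute.mpr ((this x (by simp)).symm)
      · exact commutatorElement_eq_one_iff_commute.mpr ((this y (by simp)).symm)
  · intro a b
    refine ⟨x ^ b * y ^ (-a), ?_, ?_⟩
    · -- ⁅g, x⁆ = c ^ a
      apply comm_of_rel
      have hy : y ^ (-a) * x = (c⁻¹) ^ (-a) * (x * y ^ (-a)) :=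
        aux_zpow_semiconj y x c⁻¹ (fun w => (hzc w).inv_left) h2 (-a)
      calc x ^ b * y ^ (-a) * x = x ^ b * (y ^ (-a) * x) := by rw [mul_assoc]
        _ = x ^ b * ((c⁻¹) ^ (-a) * (x * y ^ (-a))) := by rw [hy]
        _ = x ^ b * (c ^ a * (x * y ^ (-a))) := by rw [inv_zpow, ← zpow_neg, neg_neg]
        _ = (x ^ b * c ^ a) * (x * y ^ (-a)) := by rw [mul_assoc]
        _ = (c ^ a * x ^ b) * (x * y ^ (-a)) := by rw [((hzc _).zpow_left a).eq]
        _ = c ^ a * (x * (x ^ b * y ^ (-a))) := by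
            rw [mul_assoc, ← mul_assoc (x ^ b), ← (Commute.self_zpow x b).eq]; group
    · -- ⁅g, y⁆ = c ^ b
      apply comm_of_rel
      have hx : x ^ b * y = c ^ b * (y * x ^ b) :=
        aux_zpow_semiconj x y c hzc h1 b
      calc x ^ b * y ^ (-a) * y = (x ^ b * y) * y ^ (-a) := by
            rw [mul_assoc, mul_assoc, (Commute.self_zpow y (-a)).symm.eq]
        _ = (c ^ b * (y * x ^ b)) * y ^ (-a) := by rw [hx]
        _ = c ^ b * (y * (x ^ b * y ^ (-a))) := by group
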